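/- Let (x, ξ) ∈ ℝ⁴ × (ℝ⁴ \ {0}) and define the composed relation by declaring (x̃, ξ̃) related to (x, ξ) if C(x,ξ) ∩ C(x̃,ξ̃) ≠ ∅. Then: (1) if ξ is timelike, no (x̃, ξ̃) ∈ ℝ⁴ × (ℝ⁴ \ {0}) is related to (x,ξ); (2) if ξ is spacelike, the set of related points is exactly {(x, ξ)}; (3) if ξ is lightlike (then ξ₀ ≠ 0), the set of related points is exactly {((x⁰ + τ, x' − τ ξ'/ξ₀), ξ) : τ ∈ ℝ}, i.e. the translates of (x,ξ) along the null line μ(τ) = (x⁰ + τ, x' − τ ξ₀^{−1} ξ'). -/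

import Mathlib

open MeasureTheory
open scoped Real

noncomputable section

/-- Euclidean `ℝ³`. -/
abbrev E3 := EuclideanSpace ℝ (Fin 3)

/-- Minkowski space `ℝ⁴ = ℝ × ℝ³`, points written `x = (x⁰, x')`. -/
abbrev M4 := ℝ × E3

/-- The unit sphere `S² ⊆ ℝ³`. -/
def sphere2 : Set E3 := Metric.sphere 0 1

/-- The lightlike direction `θ = (1, v) ∈ ℝ⁴` as a 4-vector of components. -/
def thvec (v : E3) : Fin 4 → ℝ := Fin.cons 1 (fun i => v i)

/-- The components `(ξ₀, ξ')` of a covector as a 4-vector. -/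
def xiVec (ξ : M4) : Fin 4 → ℝ := Fin.cons ξ.1 (fun i => ξ.2 i)

/-- The Minkowski metric `η = diag(-1,1,1,1)` (its own inverse). -/
def eta4 : Fin 4 → Fin 4 → ℝ := fun i j => if i = j then (if i = 0 then -1 else 1) else 0

/-- The circle `S¹_ξ = {v ∈ S² : ξ₀ + ξ'·v = 0}`. -/
def S1xi (ξ : M4) : Set E3 := {v | ‖v‖ = 1 ∧ ξ.1 + (inner ℝ ξ.2 v : ℝ) = 0}

/-- `C(x,ξ)`: the set of `(y, v, η, w)` in relation `Z'` with `(x, ξ)`, i.e. `v ∈ S²`,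
`y = x' − x⁰v`, `η = ξ'`, `w = x⁰(ξ' − (ξ'·v)v)` and `ξ₀ = −ξ'·v`. -/
def Crel (x ξ : M4) : Set (E3 × E3 × E3 × E3) :=
  {q | ‖q.2.1‖ = 1 ∧
    q.1 = x.2 - x.1 • q.2.1 ∧
    q.2.2.1 = ξ.2 ∧
    q.2.2.2 = x.1 • (ξ.2 - (inner ℝ ξ.2 q.2.1 : ℝ) • q.2.1) ∧
    ξ.1 = -(inner ℝ ξ.2 q.2.1 : ℝ)}

lemma exists_unit_orth (a : E3) : ∃ u : E3, ‖u‖ = 1 ∧ (inner ℝ a u : ℝ) = 0 := by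
  by_cases ha : a = 0
  · refine ⟨EuclideanSpace.single 0 1, ?_, by simp [ha]⟩
    simp [EuclideanSpace.norm_single]
  · have hK : (ℝ ∙ a)ᗮ ≠ ⊥ := by
      intro h
      have htop : (ℝ ∙ a) = ⊤ := (Submodule.orthogonal_eq_bot_iff).mp h
      have h1 : Module.finrank ℝ (ℝ ∙ a) = 1 := finrank_span_singleton ha
      have h3 : Module.finrank ℝ E3 = 3 := by simp [finrank_euclideanSpace]
      rw [htop, finrank_top, h3] at h1
      norm_num at h1
    obtain ⟨w, hw, hw0⟩ := Submodule.exists_mem_ne_zero_of_ne_bot hK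
    refine ⟨‖w‖⁻¹ • w, ?_, ?_⟩
    · simp [norm_smul, abs_of_nonneg (norm_nonneg w),
        inv_mul_cancel₀ (norm_ne_zero_iff.mpr hw0)]
    · have : (inner ℝ a w : ℝ) = 0 :=
        (Submodule.mem_orthogonal (ℝ ∙ a) w).mp hw a (Submodule.mem_span_singleton_self a)
      simp [inner_smul_right, this]

lemma light_parallel {a v : E3} {t : ℝ} (hv : ‖v‖ = 1) (ha : ‖a‖ = |t|)
    (hin : (inner ℝ a v : ℝ) = -t) : a = (-t) • v := by
  have h : ‖a + t • v‖ ^ 2 = 0 := by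
    rw [norm_add_sq_real, inner_smul_right, hin, norm_smul, hv, ha]
    simp only [abs_mul, mul_one, Real.norm_eq_abs]
    nlinarith [sq_abs t]
  have h2 : a + t • v = 0 := norm_eq_zero.mp (pow_eq_zero_iff (n := 2) (by norm_num) |>.mp h)
  have : a = -(t • v) := by linear_combination (norm := module) h2
  simpa [neg_smul] using this

lemma space_mem (x ξ : M4) (h : |ξ.1| < ‖ξ.2‖) : (Crel x ξ).Nonempty := by
  obtain ⟨u, hu, hau⟩ := exists_unit_orth ξ.2
  have hn : (0:ℝ) < ‖ξ.2‖ := lt_of_le_of_lt (abs_nonneg _) h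
  have hn' : ‖ξ.2‖ ≠ 0 := ne_of_gt hn
  have hlt : ξ.1 ^ 2 < ‖ξ.2‖ ^ 2 := by nlinarith [abs_nonneg ξ.1, sq_abs ξ.1]
  set s : ℝ := Real.sqrt (1 - ξ.1 ^ 2 / ‖ξ.2‖ ^ 2) with hsdef
  have hs2 : s ^ 2 = 1 - ξ.1 ^ 2 / ‖ξ.2‖ ^ 2 := by
    rw [hsdef]
    apply Real.sq_sqrt
    rw [sub_nonneg, div_le_one (by positivity)]
    linarith
  set v : E3 := (-ξ.1 / ‖ξ.2‖ ^ 2) • ξ.2 + s • u with hvdef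
  have hiv : (inner ℝ ξ.2 v : ℝ) = -ξ.1 := by
    rw [hvdef, inner_add_right, real_inner_smul_right, real_inner_smul_right, hau,
      real_inner_self_eq_norm_sq]
    field_simp
    ring
  have hv2 : ‖v‖ ^ 2 = 1 := by
    rw [← real_inner_self_eq_norm_sq, hvdef, real_inner_add_add_self]
    simp only [real_inner_smul_left, real_inner_smul_right, real_inner_self_eq_norm_sq,
      hau, hu, one_pow, mul_zero, mul_one, zero_mul]
    rw [norm_smul, norm_smul, Real.norm_eq_abs, Real.norm_eq_abs, hu, mul_one]
    rw [mul_pow, sq_abs, sq_abs, hs2]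
    field_simp
    ring
  have hv : ‖v‖ = 1 := by nlinarith [norm_nonneg v]
  exact ⟨(x.2 - x.1 • v, v, ξ.2, x.1 • (ξ.2 - (inner ℝ ξ.2 v : ℝ) • v)),
    hv, rfl, rfl, rfl, by rw [hiv]; ring⟩

lemma light_mem (x ξ : M4) (h : |ξ.1| = ‖ξ.2‖) (h0 : ξ.1 ≠ 0) (τ : ℝ) :
    (Crel x ξ ∩ Crel (x.1 + τ, x.2 - (τ / ξ.1) • ξ.2) ξ).Nonempty := by
  have hne : (-ξ.1 : ℝ) ≠ 0 := neg_ne_zero.mpr h0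
  set v : E3 := (-ξ.1)⁻¹ • ξ.2 with hvdef
  have hxv : (-ξ.1) • v = ξ.2 := smul_inv_smul₀ hne ξ.2
  have hv : ‖v‖ = 1 := by
    rw [hvdef, norm_smul, ← h, Real.norm_eq_abs, abs_inv, abs_neg]
    exact inv_mul_cancel₀ (abs_ne_zero.mpr h0)
  have hiv : (inner ℝ ξ.2 v : ℝ) = -ξ.1 := by
    rw [hvdef, real_inner_smul_right, real_inner_self_eq_norm_sq, ← h, sq_abs]
    field_simp
  have hcv : (inner ℝ ξ.2 v : ℝ) • v = ξ.2 := by rw [hiv]; exact hxv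
  refine ⟨(x.2 - x.1 • v, v, ξ.2, 0), ⟨hv, rfl, rfl, ?_, by rw [hiv]; ring⟩,
    ⟨hv, ?_, rfl, ?_, by rw [hiv]; ring⟩⟩
  · rw [hcv]; simp
  · show x.2 - x.1 • v = (x.2 - (τ / ξ.1) • ξ.2) - (x.1 + τ) • v
    rw [← hxv]
    match_scalars <;> field_simp <;> ring
  · show (0 : E3) = (x.1 + τ) • (ξ.2 - (inner ℝ ξ.2 v : ℝ) • v)
    rw [hcv]; simp

/-- The composed relation: `(x̃, ξ̃)` is related to `(x, ξ)` iff
`C(x,ξ) ∩ C(x̃,ξ̃) ≠ ∅`.  For timelike `ξ` nothing is related to `(x,ξ)`; for spacelike `ξ`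
only `(x,ξ)` itself; for lightlike `ξ` exactly the translates of `(x,ξ)` along the null
line `μ(τ) = (x⁰ + τ, x' − τ ξ₀⁻¹ ξ')`. -/
theorem composed_relation_characterization (x ξ : M4) (hξ : ξ ≠ 0) :
    (‖ξ.2‖ < |ξ.1| → ∀ (x' ξ' : M4), ξ' ≠ 0 → ¬ (Crel x ξ ∩ Crel x' ξ').Nonempty) ∧
    (|ξ.1| < ‖ξ.2‖ → ∀ (x' ξ' : M4), ξ' ≠ 0 →
      ((Crel x ξ ∩ Crel x' ξ').Nonempty ↔ x' = x ∧ ξ' = ξ)) ∧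
    (|ξ.1| = ‖ξ.2‖ → ξ.1 ≠ 0 ∧ ∀ (x' ξ' : M4), ξ' ≠ 0 →
      ((Crel x ξ ∩ Crel x' ξ').Nonempty ↔
        ∃ τ : ℝ, x' = (x.1 + τ, x.2 - (τ / ξ.1) • ξ.2) ∧ ξ' = ξ)) := by
  refine ⟨?_, ?_, ?_⟩
  · -- timelike
    rintro h x' ξ' - ⟨q, ⟨hv, -, -, -, h5⟩, -⟩
    have hle : |ξ.1| ≤ ‖ξ.2‖ := by
      rw [h5, abs_neg]
      simpa [hv] using abs_real_inner_le_norm ξ.2 q.2.1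
    linarith
  · -- spacelike
    intro h x' ξ' hξ'
    constructor
    · rintro ⟨q, ⟨hv, hy, hη, hw, h5⟩, ⟨hv', hy', hη', hw', h5'⟩⟩
      have hx2 : ξ'.2 = ξ.2 := hη'.symm.trans hη
      have h1 : ξ'.1 = ξ.1 := by rw [h5, h5', hx2]
      set v := q.2.1 with hvdef
      set c : ℝ := inner ℝ ξ.2 v with hcdef
      have hc2 : c ^ 2 < ‖ξ.2‖ ^ 2 := by
        have hc : c = -ξ.1 := by rw [hcdef]; linarith [h5]
        rw [hc]
        nlinarith [abs_nonneg ξ.1, sq_abs ξ.1]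
      have hz2 : (inner ℝ (ξ.2 - c • v) (ξ.2 - c • v) : ℝ) = ‖ξ.2‖ ^ 2 - c ^ 2 := by
        simp only [inner_sub_left, inner_sub_right, real_inner_smul_left,
          real_inner_smul_right, real_inner_self_eq_norm_sq, real_inner_comm ξ.2 v,
          ← hcdef, hv, one_pow, norm_smul, Real.norm_eq_abs, mul_one, mul_pow, sq_abs]
        ring
      have hzne : ξ.2 - c • v ≠ 0 := by
        intro hz
        rw [hz, inner_zero_left] at hz2
        nlinarith
      have hww : x.1 • (ξ.2 - c • v) = x'.1 • (ξ.2 - c • v) := by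
        rw [← hw, hw', hx2]
      have hx1 : x'.1 = x.1 := by
        have hs : (x.1 - x'.1) • (ξ.2 - c • v) = 0 := by
          rw [sub_smul, hww, sub_self]
        rcases smul_eq_zero.mp hs with h' | h'
        · linarith [h']
        · exact absurd h' hzne
      have hx2' : x'.2 = x.2 := by
        have h' := hy.symm.trans hy'
        rw [hx1] at h'
        linear_combination (norm := module) h'.symm
      exact ⟨Prod.ext hx1 hx2', Prod.ext h1 hx2⟩
    · rintro ⟨rfl, rfl⟩
      obtain ⟨q, hq⟩ := space_mem x' ξ' h
      exact ⟨q, hq, hq⟩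
  · -- lightlike
    intro h
    have h0 : ξ.1 ≠ 0 := by
      intro h1
      apply hξ
      have hn : ‖ξ.2‖ = 0 := by rw [← h, h1]; simp
      exact Prod.ext h1 (norm_eq_zero.mp hn)
    refine ⟨h0, fun x' ξ' hξ' => ⟨?_, ?_⟩⟩
    · rintro ⟨q, ⟨hv, hy, hη, hw, h5⟩, ⟨hv', hy', hη', hw', h5'⟩⟩
      have hpar : ξ.2 = (-ξ.1) • q.2.1 :=
        light_parallel hv h.symm (by linarith [h5])
      have hx2 : ξ'.2 = ξ.2 := hη'.symm.trans hη
      have h1 : ξ'.1 = ξ.1 := by rw [h5, h5', hx2]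
      refine ⟨x'.1 - x.1, Prod.ext (by simp) ?_, Prod.ext h1 hx2⟩
      show x'.2 = x.2 - ((x'.1 - x.1) / ξ.1) • ξ.2
      have hveq : ((x'.1 - x.1) / ξ.1) • ξ.2 = (-(x'.1 - x.1)) • q.2.1 := by
        rw [hpar, smul_smul]
        congr 1
        field_simp
      rw [hveq]
      linear_combination (norm := module) hy'.symm.trans hy
    · rintro ⟨τ, rfl, rfl⟩
      exact light_mem x ξ' h h0 τ
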